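/- Suppose F is algebraically closed and E, E' are finite subgroups of (F, +), both of rank 2. If d_{1,2}(E)^{p+1} · d_{2,2}(E')^{p} = d_{1,2}(E')^{p+1} · d_{2,2}(E)^{p}, then E' = α•E for some α ∈ F^×. -/

import Mathlib

open Polynomial Pointwise

/-- `dCoef p r i E` is the Dickson-type coefficient `d_{i,r}(E)`: the coefficient of
`X ^ (p ^ (r - i))` in `∏_{c ∈ E} (X - c)`. -/
noncomputable def dCoef {F : Type*} [Field F] (p r i : ℕ)
    (E : AddSubgroup F) [Fintype E] : F :=
  (∏ c : E, (X - C (c : F))).coeff (p ^ (r - i))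

section Aux

variable {F : Type*} [Field F]

lemma evalProd (E : AddSubgroup F) [Fintype E] (x : F) :
    (∏ c : E, (X - C (c : F))).eval x = ∏ c : E, (x - (c : F)) := by
  simp [eval_prod]

lemma prodMonic (E : AddSubgroup F) [Fintype E] : (∏ c : E, (X - C (c : F))).Monic :=
  monic_prod_of_monic _ _ fun c _ => monic_X_sub_C _

lemma prodDeg (E : AddSubgroup F) [Fintype E] :
    (∏ c : E, (X - C (c : F))).natDegree = Fintype.card E := by
  rw [natDegree_prod]
  · simp
  · intro c _; exact X_sub_C_ne_zero _

lemma memIffProd (E : AddSubgroup F) [Fintype E] (x : F) :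
    x ∈ E ↔ (∏ c : E, (x - (c : F))) = 0 := by
  constructor
  · intro hx
    exact Finset.prod_eq_zero (Finset.mem_univ (⟨x, hx⟩ : E)) (sub_self x)
  · intro hx
    obtain ⟨c, -, hc⟩ := Finset.prod_eq_zero_iff.mp hx
    obtain rfl : x = (c : F) := sub_eq_zero.mp hc
    exact c.2

lemma prodShift (E : AddSubgroup F) [Fintype E] {y : F} (hy : y ∈ E) (x : F) :
    (∏ c : E, (x + y - (c : F))) = ∏ c : E, (x - (c : F)) := by
  rw [← Equiv.prod_comp (Equiv.subRight (⟨y, hy⟩ : E)) (fun c : E => x - (c : F))]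
  apply Finset.prod_congr rfl
  intro c _
  simp only [Equiv.subRight_apply]
  push_cast
  ring

lemma prodAdditive (E : AddSubgroup F) [Fintype E] (x y : F) :
    (∏ c : E, (X - C (c : F))).eval (x + y)
      = (∏ c : E, (X - C (c : F))).eval x + (∏ c : E, (X - C (c : F))).eval y := by
  classical
  set f := ∏ c : E, (X - C (c : F)) with hfdef
  have hmon := prodMonic E
  have hdeg := prodDeg E
  have hcard : 0 < Fintype.card E := Fintype.card_pos
  set g := f.comp (X + C x) - f - C (f.eval x) with hg
  have hgz : g = 0 := by
    have hgdeg : g.natDegree < Fintype.card E := by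
      rcases eq_or_ne g 0 with h0 | h0
      · simpa [h0] using hcard
      · have hcm : (f.comp (X + C x)).Monic := hmon.comp_X_add_C x
        have hcd : (f.comp (X + C x)).natDegree = f.natDegree := by
          simp [natDegree_comp]
        have h1 : (f.comp (X + C x) - f).degree < f.degree := by
          have := degree_sub_lt (p := f.comp (X + C x)) (q := f)
            (by rw [degree_eq_natDegree hcm.ne_zero, degree_eq_natDegree hmon.ne_zero, hcd])
            hcm.ne_zero (by rw [hcm.leadingCoeff, hmon.leadingCoeff])
          rwa [degree_eq_natDegree hcm.ne_zero, hcd, ← degree_eq_natDegree hmon.ne_zero] at this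
        have h2 : g.degree < f.degree := by
          rw [hg]
          refine lt_of_le_of_lt (degree_sub_le _ _) (max_lt h1 ?_)
          refine lt_of_le_of_lt degree_C_le ?_
          rw [degree_eq_natDegree hmon.ne_zero, hdeg]
          exact_mod_cast hcard
        have := natDegree_lt_natDegree h0 h2
        rwa [hdeg] at this
    apply eq_zero_of_natDegree_lt_card_of_eval_eq_zero g
      (Subtype.val_injective : Function.Injective ((↑) : E → F)) ?_ hgdeg
    intro c
    have h1 : f.eval ((c : F) + x) = f.eval x := by
      rw [add_comm, evalProd, evalProd, prodShift E c.2 x]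
    have h2 : f.eval (c : F) = 0 := by
      rw [evalProd]; exact (memIffProd E _).mp c.2
    simp [hg, eval_comp, h1, h2]
  have := congrArg (eval y) hgz
  simp only [hg, eval_sub, eval_comp, eval_add, eval_X, eval_C, eval_zero] at this
  rw [add_comm x y]
  linear_combination this

lemma derivConstOfAdditive [Infinite F] {f : F[X]}
    (hf : ∀ x y : F, f.eval (x + y) = f.eval x + f.eval y) :
    derivative f = C (f.coeff 1) := by
  have hcomp : ∀ x : F, f.comp (X + C x) = f + C (f.eval x) := by
    intro x
    have h0 : f.comp (X + C x) - (f + C (f.eval x)) = 0 := by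
      apply zero_of_eval_zero
      intro y
      simp [eval_comp, hf]
    linear_combination h0
  have hder : ∀ x : F, (derivative f).eval x = (derivative f).eval 0 := by
    intro x
    have h1 := congrArg derivative (hcomp x)
    rw [derivative_comp] at h1
    simp only [derivative_add, derivative_X, derivative_C, add_zero, one_mul] at h1
    have h2 := congrArg (eval 0) h1
    simpa [eval_comp] using h2
  have h0 : derivative f - C ((derivative f).eval 0) = 0 := by
    apply zero_of_eval_zero; intro x; simp [hder x]
  have h1 : derivative f = C ((derivative f).eval 0) := by linear_combination h0
  rw [h1]
  congr 1
  rw [← coeff_zero_eq_eval_zero, coeff_derivative]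
  simp

variable {p : ℕ} [Fact p.Prime] [CharP F p]

lemma structure2 [IsAlgClosed F] (E : AddSubgroup F) [Fintype E]
    (hE : Fintype.card E = p ^ 2) :
    (∀ x : F, ∏ c : E, (x - (c : F))
        = x ^ p ^ 2 + dCoef p 2 1 E * x ^ p + dCoef p 2 2 E * x)
    ∧ dCoef p 2 2 E ≠ 0 := by
  classical
  have hp := (Fact.out : p.Prime)
  have hp0 : p ≠ 0 := hp.ne_zero
  have hp2 : 2 ≤ p := hp.two_le
  set f := ∏ c : E, (X - C (c : F)) with hfdef
  have hadd : ∀ x y : F, f.eval (x + y) = f.eval x + f.eval y := prodAdditive E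
  set a := f.coeff 1 with hadef
  have hda : derivative f = C a := derivConstOfAdditive hadd
  have hf1d : derivative (f - C a * X) = 0 := by
    rw [derivative_sub, hda, derivative_C_mul, derivative_X, mul_one, sub_self]
  set g := contract p (f - C a * X) with hgdef
  have hge : expand F p g = f - C a * X := expand_contract p hf1d hp0
  have hgeval : ∀ t : F, g.eval (t ^ p) = f.eval t - a * t := by
    intro t
    have h1 := expand_eval p g t
    rw [hge] at h1
    simpa using h1.symm
  have hgadd : ∀ u v : F, g.eval (u + v) = g.eval u + g.eval v := by
    intro u v
    obtain ⟨x, rfl⟩ := IsAlgClosed.exists_pow_nat_eq u hp.pos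
    obtain ⟨y, rfl⟩ := IsAlgClosed.exists_pow_nat_eq v hp.pos
    rw [← add_pow_char, hgeval, hgeval, hgeval, hadd]
    ring
  set b := g.coeff 1 with hbdef
  have hdb : derivative g = C b := derivConstOfAdditive hgadd
  have hg1d : derivative (g - C b * X) = 0 := by
    rw [derivative_sub, hdb, derivative_C_mul, derivative_X, mul_one, sub_self]
  set k := contract p (g - C b * X) with hkdef
  have hke : expand F p k = g - C b * X := expand_contract p hg1d hp0
  have hkey : f = expand F (p * p) k + C b * X ^ p + C a * X := by
    have h1 := congrArg (expand F p) hke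
    rw [map_sub, map_mul, expand_C, expand_X, hge, expand_expand] at h1
    linear_combination -h1
  have hmon := prodMonic E
  have hdeg : f.natDegree = p ^ 2 := by rw [prodDeg E, hE]
  have hppos : 0 < p * p := Nat.mul_pos hp.pos hp.pos
  have hpp : p ^ 2 = p * p := sq p
  have hne1 : p ≠ 1 := hp.one_lt.ne'
  have hnepp : p * p ≠ p := by nlinarith
  have hnepp1 : p * p ≠ 1 := by nlinarith
  have hf0 : f.coeff 0 = 0 := by
    rw [coeff_zero_eq_eval_zero, evalProd]
    exact (memIffProd E 0).mp E.zero_mem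
  have hk0 : k.coeff 0 = 0 := by
    have h0' := congrArg (fun q : F[X] => q.coeff 0) hkey
    simp only [coeff_add, coeff_C_mul, coeff_X_pow, coeff_X_zero, coeff_expand hppos,
      Nat.zero_div, Nat.dvd_zero, if_true, mul_zero, add_zero, mul_ite, mul_one] at h0'
    rw [hf0] at h0'
    simpa [(Ne.symm hp0 : (0:ℕ) ≠ p)] using h0'.symm
  have hk1 : k.coeff 1 = 1 := by
    have h1' := congrArg (fun q : F[X] => q.coeff (p * p)) hkey
    have hfc : f.coeff (p * p) = 1 := by
      rw [← hpp, ← hdeg]; exact hmon.coeff_natDegree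
    simp only [coeff_add, coeff_C_mul, coeff_X_pow, coeff_X, coeff_expand hppos,
      Nat.dvd_refl, if_true, Nat.div_self hppos, mul_ite, mul_one, mul_zero] at h1'
    rw [hfc] at h1'
    simpa [hnepp, (Ne.symm hnepp1 : (1:ℕ) ≠ p*p)] using h1'.symm
  have hknd : k.natDegree ≤ 1 := by
    have h2 : expand F (p * p) k = f - C b * X ^ p - C a * X := by
      linear_combination -hkey
    have h3 : (expand F (p * p) k).natDegree ≤ p ^ 2 := by
      rw [h2]
      refine le_trans (natDegree_sub_le _ _) (max_le (le_trans (natDegree_sub_le _ _)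
        (max_le hdeg.le ?_)) ?_)
      · refine le_trans (natDegree_C_mul_le _ _) ?_
        rw [natDegree_X_pow]
        calc p = p ^ 1 := (pow_one p).symm
        _ ≤ p ^ 2 := Nat.pow_le_pow_right hp.pos (by norm_num)
      · refine le_trans (natDegree_C_mul_le _ _) ?_
        rw [natDegree_X]
        nlinarith
    rw [natDegree_expand, hpp] at h3
    by_contra hcon
    push_neg at hcon
    nlinarith
  have hkX : k = X := by
    have := eq_X_add_C_of_natDegree_le_one hknd
    rw [hk1, hk0] at this
    simpa using this
  rw [hkX, expand_X] at hkey
  have hcoefp : f.coeff p = b := by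
    rw [hkey]
    simp [coeff_X_pow, coeff_X, hne1, Ne.symm hnepp, Ne.symm hne1]
  have hd1 : dCoef p 2 1 E = b := by
    rw [dCoef, ← hfdef]
    norm_num
    exact hcoefp
  have hd2 : dCoef p 2 2 E = a := by
    rw [dCoef, ← hfdef]
    norm_num
    exact hadef.symm
  constructor
  · intro x
    rw [← evalProd, ← hfdef, hkey, hd1, hd2, hpp]
    simp
  · rw [hd2]
    intro h0
    have hsep : f.Separable := separable_prod_X_sub_C_iff.mpr Subtype.val_injective
    rw [Separable, hda, h0, map_zero] at hsep
    have := natDegree_eq_zero_of_isUnit (isCoprime_zero_right.mp hsep)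
    rw [hdeg] at this
    exact (pow_ne_zero 2 hp0) this

end Aux

/-- Over an algebraically closed `F`, two finite subgroups of rank `2`
with `d_{1,2}(E)^{p+1} d_{2,2}(E')^p = d_{1,2}(E')^{p+1} d_{2,2}(E)^p` are dilations
of one another. -/
theorem statement7 {F : Type*} [Field F] [IsAlgClosed F] {p : ℕ} [Fact p.Prime]
    [CharP F p] (E E' : AddSubgroup F) [Fintype E] [Fintype E']
    (hE : Fintype.card E = p ^ 2) (hE' : Fintype.card E' = p ^ 2)
    (h : dCoef p 2 1 E ^ (p + 1) * dCoef p 2 2 E' ^ p =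
      dCoef p 2 1 E' ^ (p + 1) * dCoef p 2 2 E ^ p) :
    ∃ α : F, α ≠ 0 ∧ (E' : Set F) = α • (E : Set F) := by
  classical
  have hp := (Fact.out : p.Prime)
  have hp0 : p ≠ 0 := hp.ne_zero
  have hp2 : 2 ≤ p := hp.two_le
  obtain ⟨hfE, ha⟩ := structure2 E hE
  obtain ⟨hfE', ha'⟩ := structure2 E' hE'
  set b := dCoef p 2 1 E with hbdef
  set a := dCoef p 2 2 E with hadef
  set b' := dCoef p 2 1 E' with hb'def
  set a' := dCoef p 2 2 E' with ha'def
  obtain ⟨q, hq⟩ : ∃ q, p = q + 1 := ⟨p - 1, by omega⟩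
  obtain ⟨α, hα, hbb, haa⟩ :
      ∃ α : F, α ≠ 0 ∧ α ^ p * b' = α ^ p ^ 2 * b ∧ α * a' = α ^ p ^ 2 * a := by
    rcases eq_or_ne b 0 with hb | hb
    · have hb' : b' = 0 := by
        have h1 : b' ^ (p + 1) * a ^ p = 0 := by rw [← h, hb]; ring
        rcases mul_eq_zero.mp h1 with h1 | h1
        · exact pow_eq_zero_iff (by omega) |>.mp h1
        · exact absurd (pow_eq_zero_iff hp0 |>.mp h1) ha
      have hpos : 0 < p ^ 2 - 1 := Nat.sub_pos_of_lt (by nlinarith)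
      obtain ⟨α, hαe⟩ := IsAlgClosed.exists_pow_nat_eq (a' / a) hpos
      have hα0 : α ≠ 0 := by
        intro h0
        rw [h0, zero_pow hpos.ne'] at hαe
        exact (div_ne_zero ha' ha) hαe.symm
      refine ⟨α, hα0, by rw [hb, hb']; ring, ?_⟩
      have e1 : α ^ p ^ 2 = α * α ^ (p ^ 2 - 1) := by
        rw [← pow_succ', Nat.sub_add_cancel (by nlinarith : 1 ≤ p ^ 2)]
      rw [e1, hαe]
      field_simp
    · have hb' : b' ≠ 0 := by
        intro h0
        have h1 : b ^ (p + 1) * a' ^ p = 0 := by rw [h, h0]; ring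
        rcases mul_eq_zero.mp h1 with h1 | h1
        · exact hb (pow_eq_zero_iff (by omega) |>.mp h1)
        · exact ha' (pow_eq_zero_iff hp0 |>.mp h1)
      obtain ⟨α, hαe⟩ := IsAlgClosed.exists_pow_nat_eq (a' * b / (a * b')) (show 0 < p - 1 by omega)
      have hab' : a * b' ≠ 0 := mul_ne_zero ha hb'
      have hδ : α ^ (p - 1) * (a * b') = a' * b := by
        rw [hαe]; field_simp
      have hα0 : α ≠ 0 := by
        intro h0
        rw [h0, zero_pow (show p - 1 ≠ 0 by omega), zero_mul] at hδ
        exact (mul_ne_zero ha' hb) hδ.symm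
      refine ⟨α, hα0, ?_, ?_⟩
      · have e2 : α ^ p ^ 2 = α ^ p * (α ^ (p - 1)) ^ p := by
          rw [← pow_mul, ← pow_add]
          congr 1
          subst hq; simp; ring
        rw [e2]
        have hδp : (α ^ (p - 1) * (a * b')) ^ p = (a' * b) ^ p := by rw [hδ]
        have hc : b' * ((a * b') ^ p) = ((α ^ (p - 1)) ^ p * b) * ((a * b') ^ p) := by
          linear_combination (-b) * hδp - h
        have h5 := mul_right_cancel₀ (pow_ne_zero p hab') hc
        rw [h5]; ring
      · have e3 : α ^ p ^ 2 = α * (α ^ (p - 1)) ^ (p + 1) := by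
          rw [← pow_mul, ← pow_succ']
          congr 1
          subst hq; simp; ring
        rw [e3]
        have hδp : (α ^ (p - 1) * (a * b')) ^ (p + 1) = (a' * b) ^ (p + 1) := by rw [hδ]
        have hc : a' * ((a * b') ^ (p + 1)) = ((α ^ (p - 1)) ^ (p + 1) * a) * ((a * b') ^ (p + 1)) := by
          linear_combination (-a) * hδp - (a * a') * h
        have h5 := mul_right_cancel₀ (pow_ne_zero (p + 1) hab') hc
        rw [h5]; ring
  refine ⟨α, hα, ?_⟩
  have hsub : α • (E : Set F) ⊆ (E' : Set F) := by
    intro x hx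
    obtain ⟨c, hc, rfl⟩ := Set.mem_smul_set.mp hx
    have hcE : c ∈ E := hc
    have hc0 : c ^ p ^ 2 + b * c ^ p + a * c = 0 := by
      rw [← hfE c]
      exact (memIffProd E c).mp hcE
    have hz : (α * c) ^ p ^ 2 + b' * (α * c) ^ p + a' * (α * c) = 0 := by
      linear_combination α ^ p ^ 2 * hc0 + c ^ p * hbb + c * haa
    have : α * c ∈ E' := by
      rw [memIffProd E' (α * c), hfE']
      exact hz
    simpa using this
  haveI : Finite (↥((E' : Set F))) := inferInstanceAs (Finite ↥E')
  have h1 : ((E' : Set F)).ncard = p ^ 2 := by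
    rw [← Nat.card_coe_set_eq, SetLike.coe_sort_coe, Nat.card_eq_fintype_card, hE']
  have h2 : (α • (E : Set F)).ncard = p ^ 2 := by
    have himg : α • (E : Set F) = (fun y : F => α * y) '' (E : Set F) := by
      ext z
      simp [Set.mem_smul_set, eq_comm]
    rw [himg, Set.ncard_image_of_injective _ (mul_right_injective₀ hα),
      ← Nat.card_coe_set_eq, SetLike.coe_sort_coe, Nat.card_eq_fintype_card, hE]
  exact (Set.eq_of_subset_of_ncard_le hsub (by rw [h1, h2]) (Set.toFinite _)).symm
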